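/- Under the assumptions of the monotone mapping theorem with olu·g_n^o + √(olu)·i_n^o + p_n^o ≥ 0 for all n, the mapping f satisfies f(olu·1) ≤ olu·1 entrywise. -/

import Mathlib

open Finset

/-- Under condition (iii), the monotone DC power flow mapping satisfies f(olu·1) ≤ olu·1. -/
theorem mapping_at_upper_corner_le {P Q : ℕ} (ulu olu : ℝ)
    (g : Fin P → Fin P → ℝ) (gV : Fin P → Fin Q → ℝ)
    (go io c k p : Fin P → ℝ) (v : Fin Q → ℝ)
    (h0 : 0 < ulu) (h1 : ulu ≤ olu)
    (hg : ∀ n m, 0 ≤ g n m) (hgV : ∀ n q, 0 ≤ gV n q)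
    (hgo : ∀ n, 0 ≤ go n) (hio : ∀ n, 0 ≤ io n)
    (hc : ∀ n, c n = (∑ m, g n m) + (∑ q, gV n q) + go n)
    (hcpos : ∀ n, 0 < c n)
    (hk : ∀ n, k n = (∑ q, gV n q * v q) - io n)
    (hv : ∀ q, v q ≤ Real.sqrt olu)
    (hiii : ∀ n, olu * go n + Real.sqrt olu * io n + p n ≥ 0) :
    (fun n => (∑ m, g n m / c n * Real.sqrt (olu * olu))
        + k n / c n * Real.sqrt olu - p n / c n)
      ≤ fun _ : Fin P => olu := by
  intro n
  simp only
  have holu : (0:ℝ) < olu := lt_of_lt_of_le h0 h1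
  have hs : Real.sqrt (olu * olu) = olu := Real.sqrt_mul_self holu.le
  have hso : Real.sqrt olu * Real.sqrt olu = olu := Real.mul_self_sqrt holu.le
  have hsnn : 0 ≤ Real.sqrt olu := Real.sqrt_nonneg _
  rw [hs]
  simp only [div_mul_eq_mul_div, ← Finset.sum_div, div_sub_div_same, ← add_div]
  rw [← Finset.sum_mul, div_le_iff₀ (hcpos n), hc n, hk n]
  have key : 0 ≤ ∑ q, gV n q * (olu - Real.sqrt olu * v q) := by
    apply Finset.sum_nonneg
    intro q _
    apply mul_nonneg (hgV n q)
    have : Real.sqrt olu * v q ≤ Real.sqrt olu * Real.sqrt olu :=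
      mul_le_mul_of_nonneg_left (hv q) hsnn
    linarith [hso]
  have := hiii n
  have expand : ∑ q, gV n q * (olu - Real.sqrt olu * v q)
      = olu * ∑ q, gV n q - Real.sqrt olu * ∑ q, gV n q * v q := by
    rw [Finset.mul_sum, Finset.mul_sum, ← Finset.sum_sub_distrib]
    congr 1; ext q; ring
  rw [expand] at key
  ring_nf
  nlinarith [key, this]
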